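/- (Graham–Rothschild Theorem) Let A be a finite alphabet and let m, ℓ ≥ 1 and k ≥ 2 be integers. Then there exists a positive integer n such that for every partition of W^n_ℓ(A) into k classes Σ_1, …, Σ_k there exist u ∈ W^n_m(A) and an index j such that {u · v : v ∈ W^m_ℓ(A)} ⊆ Σ_j. -/

import Mathlib

/-- An `m`-parameter word of length `n` over the alphabet `A` (with variables `x_1, …, x_m`
encoded as elements of `Fin m`): every variable occurs at least once, and the first occurrence
of `x_i` precedes the first occurrence of `x_j` whenever `i < j` (expressed equivalently:
before every occurrence of `x_j` there is an occurrence of `x_i`). -/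
def IsParamWord {A : Type} {n m : ℕ} (w : Fin n → A ⊕ Fin m) : Prop :=
  (∀ i : Fin m, ∃ p, w p = Sum.inr i) ∧
  (∀ i j : Fin m, i < j → ∀ q, w q = Sum.inr j → ∃ p, p < q ∧ w p = Sum.inr i)

/-- The composition `u · v` of parameter words: substitute `v i` for each occurrence of the
variable `x_i` in `u`, simultaneously for all `i`. -/
def compWord {A : Type} {n m l : ℕ} (u : Fin n → A ⊕ Fin m) (v : Fin m → A ⊕ Fin l) :
    Fin n → A ⊕ Fin l :=
  fun p => Sum.elim Sum.inl v (u p)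

namespace GRProof

open Sum List

theorem comp_assoc {A : Type} {n m r s : ℕ} (u : Fin n → A ⊕ Fin m) (v : Fin m → A ⊕ Fin r)
    (w : Fin r → A ⊕ Fin s) : compWord (compWord u v) w = compWord u (compWord v w) := by
  funext q; simp only [compWord]; cases u q <;> simp [compWord]

theorem isPW_comp {A : Type} {n m s : ℕ} {u : Fin n → A ⊕ Fin m} {v : Fin m → A ⊕ Fin s}
    (hu : IsParamWord u) (hv : IsParamWord v) : IsParamWord (compWord u v) := by
  constructor
  · intro i
    obtain ⟨t, ht⟩ := hv.1 i
    obtain ⟨p, hp⟩ := hu.1 t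
    exact ⟨p, by simp [compWord, hp, ht]⟩
  · intro i j hij q hq
    cases hu' : u q with
    | inl a => simp [compWord, hu'] at hq
    | inr t =>
      have hvt : v t = Sum.inr j := by simpa [compWord, hu'] using hq
      obtain ⟨t', ht'lt, ht'⟩ := hv.2 i j hij t hvt
      obtain ⟨p, hplt, hp⟩ := hu.2 t' t ht'lt q hu'
      exact ⟨p, hplt, by simp [compWord, hp, ht']⟩

theorem map_eq_inr_iff {A B : Type} {l : ℕ} {f : A → B} {x : A ⊕ Fin l} {j : Fin l} :
    Sum.map f id x = Sum.inr j ↔ x = Sum.inr j := by cases x <;> simp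

theorem isPW_map {A B : Type} {n l : ℕ} (f : A → B) {w : Fin n → A ⊕ Fin l}
    (h : IsParamWord w) : IsParamWord (Sum.map f id ∘ w) := by
  constructor
  · intro i
    obtain ⟨p, hp⟩ := h.1 i
    exact ⟨p, by simp [hp, map_eq_inr_iff]⟩
  · intro i j hij q hq
    rw [Function.comp_apply, map_eq_inr_iff] at hq
    obtain ⟨p, hplt, hp⟩ := h.2 i j hij q hq
    exact ⟨p, hplt, by simp [hp, map_eq_inr_iff]⟩

theorem comp_map {A B : Type} {n m s : ℕ} (f : A → B) (u : Fin n → A ⊕ Fin m)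
    (v : Fin m → A ⊕ Fin s) :
    Sum.map f id ∘ compWord u v = compWord (Sum.map f id ∘ u) (Sum.map f id ∘ v) := by
  funext q; simp only [compWord, Function.comp_apply]
  cases u q <;> simp

/-- identity parameter word -/
theorem isPW_id {A : Type} {M : ℕ} : IsParamWord (Sum.inr : Fin M → A ⊕ Fin M) := by
  refine ⟨fun i => ⟨i, rfl⟩, fun i j hij q hq => ?_⟩
  have : q = j := by simpa using hq
  exact ⟨i, by simpa [this] using hij, rfl⟩

theorem isPW_elim0 {A : Type} : IsParamWord (Fin.elim0 : Fin 0 → A ⊕ Fin 0) :=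
  ⟨fun i => i.elim0, fun _ _ _ q => q.elim0⟩

/-! ### prefix extraction -/

def preList {A B : Type} (L : List (A ⊕ B)) : List A :=
  (L.takeWhile Sum.isLeft).filterMap fun x => x.getLeft?

def prefixA {A : Type} {n l : ℕ} (v : Fin n → A ⊕ Fin l) : List A :=
  preList (List.ofFn v)

theorem preList_nil {A B : Type} : preList ([] : List (A ⊕ B)) = [] := rfl

theorem preList_cons_inr {A B : Type} (b : B) (L : List (A ⊕ B)) :
    preList (Sum.inr b :: L) = [] := by
  simp [preList, List.takeWhile_cons]

theorem preList_cons_inl {A B : Type} (a : A) (L : List (A ⊕ B)) :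
    preList (Sum.inl a :: L) = a :: preList L := by
  simp [preList, List.takeWhile_cons]

theorem preList_append_stop {A B : Type} (L₁ L₂ : List (A ⊕ B))
    (h : ∃ x ∈ L₁, x.isLeft = false) : preList (L₁ ++ L₂) = preList L₁ := by
  induction L₁ with
  | nil => simp at h
  | cons x L ih =>
    cases x with
    | inl a =>
      rw [List.cons_append, preList_cons_inl, preList_cons_inl, ih]
      obtain ⟨y, hy, hy2⟩ := h
      rcases List.mem_cons.mp hy with rfl | hy'
      · simp at hy2
      · exact ⟨y, hy', hy2⟩
    | inr b => rw [List.cons_append, preList_cons_inr, preList_cons_inr]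

theorem preList_inl_append {A B : Type} (G : List A) (L₂ : List (A ⊕ B)) :
    preList (G.map Sum.inl ++ L₂) = G ++ preList L₂ := by
  induction G with
  | nil => simp
  | cons a G ih => rw [List.map_cons, List.cons_append, preList_cons_inl, ih, List.cons_append]

theorem prefixA_of_inr {A : Type} {M l : ℕ} {v : Fin (M + 1) → A ⊕ Fin l} {j : Fin l}
    (h : v 0 = Sum.inr j) : prefixA v = [] := by
  rw [prefixA, List.ofFn_succ, h, preList_cons_inr]

theorem prefixA_of_inl {A : Type} {M l : ℕ} {v : Fin (M + 1) → A ⊕ Fin l} {a : A}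
    (h : v 0 = Sum.inl a) : prefixA v = a :: prefixA (fun t => v t.succ) := by
  rw [prefixA, List.ofFn_succ, h, preList_cons_inl]; rfl

theorem prefixA_of_empty {A : Type} {M l : ℕ} (hA : ¬ Nonempty A) (v : Fin M → A ⊕ Fin l) :
    prefixA v = [] := by
  match M, v with
  | 0, v => simp [prefixA, preList]
  | (M+1), v =>
    cases h : v 0 with
    | inl a => exact absurd ⟨a⟩ hA
    | inr j => exact prefixA_of_inr h

/-! ### tail lemmas -/

theorem isPW_tail {A : Type} {M l : ℕ} {v : Fin (M + 1) → A ⊕ Fin l} {a : A}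
    (hv : IsParamWord v) (h0 : v 0 = Sum.inl a) : IsParamWord (fun t => v t.succ) := by
  constructor
  · intro i
    obtain ⟨p, hp⟩ := hv.1 i
    have hp0 : p ≠ 0 := by rintro rfl; rw [h0] at hp; exact Sum.inl_ne_inr hp
    obtain ⟨q, rfl⟩ := Fin.eq_succ_of_ne_zero hp0
    exact ⟨q, hp⟩
  · intro i j hij t ht
    obtain ⟨p, hplt, hp⟩ := hv.2 i j hij t.succ ht
    have hp0 : p ≠ 0 := by rintro rfl; rw [h0] at hp; exact Sum.inl_ne_inr hp
    obtain ⟨s, rfl⟩ := Fin.eq_succ_of_ne_zero hp0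
    exact ⟨s, by exact_mod_cast Fin.succ_lt_succ_iff.mp hplt, hp⟩

theorem first_var_zero {A : Type} {M l : ℕ} {v : Fin M → A ⊕ Fin (l + 1)}
    (hv : IsParamWord v) {q : Fin M} {j : Fin (l + 1)} (hq : v q = Sum.inr j)
    (hmin : ∀ p, p < q → v p ≠ Sum.inr (0 : Fin (l + 1))) : j = 0 := by
  by_contra hj
  have h0j : (0 : Fin (l + 1)) < j := Fin.pos_of_ne_zero hj
  obtain ⟨p, hplt, hp⟩ := hv.2 0 j h0j q hq
  exact hmin p hplt hp

end GRProof

namespace GRProof2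
open Sum List GRProof Combinatorics

def GRStmt (l : ℕ) : Prop :=
  ∀ (A : Type) [Finite A] (M : ℕ) (κ : Type) [Finite κ] [Nonempty κ],
    ∃ n : ℕ, ∀ χ : (Fin n → A ⊕ Fin l) → κ,
      ∃ U : Fin n → A ⊕ Fin M, IsParamWord U ∧
        ∀ v w : Fin M → A ⊕ Fin l, IsParamWord v → IsParamWord w →
          χ (compWord U v) = χ (compWord U w)

/-- Hales-Jewett for lines, `Fin` indexed, unpacked. -/
theorem line_fin (α κ : Type) [Finite α] [Finite κ] :
    ∃ n : ℕ, ∀ C : (Fin n → α) → κ, ∃ F : Fin n → Option α,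
      (∃ i, F i = none) ∧ ∃ c, ∀ x : α, C (fun i => (F i).getD x) = c := by
  obtain ⟨ι, _, hι⟩ := Line.exists_mono_in_high_dimension α κ
  refine ⟨Fintype.card ι, fun C => ?_⟩
  set e : Fin (Fintype.card ι) ≃ ι := (Fintype.equivFin ι).symm with he
  obtain ⟨l, c, hc⟩ := hι fun v => C (v ∘ e)
  refine ⟨l.idxFun ∘ e, ⟨e.symm l.proper.choose, by simp [l.proper.choose_spec]⟩, c, fun x => ?_⟩
  exact hc x

/-! ### grid positions -/

def gridi {nL M : ℕ} (q : Fin (nL * M)) : Fin nL :=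
  have hM : 0 < M := Nat.pos_of_ne_zero fun h => by subst h; simpa using q.2
  ⟨q.val / M, (Nat.div_lt_iff_lt_mul hM).2 q.2⟩

def gride {nL M : ℕ} (q : Fin (nL * M)) : Fin M :=
  have hM : 0 < M := Nat.pos_of_ne_zero fun h => by subst h; simpa using q.2
  ⟨q.val % M, Nat.mod_lt _ hM⟩

def gpos {nL M : ℕ} (i : Fin nL) (e : Fin M) : Fin (nL * M) :=
  ⟨M * i.val + e.val, by
    calc M * i.val + e.val < M * i.val + M := Nat.add_lt_add_left e.2 _
    _ = M * (i.val + 1) := (Nat.mul_succ M i.val).symm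
    _ ≤ M * nL := Nat.mul_le_mul_left _ i.2
    _ = nL * M := Nat.mul_comm M nL⟩

theorem gridi_gpos {nL M : ℕ} (i : Fin nL) (e : Fin M) : gridi (gpos i e) = i := by
  simp only [gridi, gpos]
  ext
  simp [Nat.mul_add_div (by
    have hM : 0 < M := Nat.pos_of_ne_zero fun h => by subst h; exact e.elim0
    exact hM), Nat.div_eq_of_lt e.2]

theorem gride_gpos {nL M : ℕ} (i : Fin nL) (e : Fin M) : gride (gpos i e) = e := by
  simp only [gride, gpos]
  ext
  simp [Nat.mul_add_mod, Nat.mod_eq_of_lt e.2]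

theorem gpos_grid {nL M : ℕ} (q : Fin (nL * M)) : gpos (gridi q) (gride q) = q := by
  simp only [gridi, gride, gpos]
  ext
  exact Nat.div_add_mod q.val M

theorem gr_zero : GRStmt 0 := by
  intro A _ M κ _ _
  obtain ⟨nL, hnl⟩ := line_fin (Fin M → A) κ
  refine ⟨nL * M, fun χ => ?_⟩
  set E : (Fin nL → (Fin M → A)) → κ := fun h => χ fun q => Sum.inl (h (gridi q) (gride q))
    with hE
  obtain ⟨F, ⟨i₀, hi₀⟩, c, hc⟩ := hnl E
  set U : Fin (nL * M) → A ⊕ Fin M := fun q =>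
    (F (gridi q)).elim (Sum.inr (gride q)) (fun f => Sum.inl (f (gride q))) with hU
  have toA : ∀ x : A ⊕ Fin 0, ∃ a, x = Sum.inl a := by
    rintro (a | i); exact ⟨a, rfl⟩; exact i.elim0
  have key : ∀ v : Fin M → A ⊕ Fin 0,
      compWord U v = fun q => Sum.inl ((F (gridi q)).getD (fun t => (toA (v t)).choose) (gride q)) := by
    intro v
    funext q
    simp only [compWord, hU]
    cases hF : F (gridi q) with
    | none =>
      simp only [hF, Option.elim_none, Option.getD_none, Sum.elim_inr]
      exact (toA (v (gride q))).choose_spec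
    | some f => simp [hF]
  refine ⟨U, ⟨?_, ?_⟩, fun v w _ _ => ?_⟩
  · intro i
    refine ⟨gpos i₀ i, ?_⟩
    simp only [hU, gridi_gpos, gride_gpos, hi₀, Option.elim_none]
  · intro i j hij q hq
    cases hF : F (gridi q) with
    | some f => simp only [hU, hF, Option.elim_some] at hq; exact (Sum.inl_ne_inr hq).elim
    | none =>
      have hj : gride q = j := by
        simp only [hU, hF, Option.elim_none] at hq
        exact Sum.inr.inj hq
      refine ⟨gpos (gridi q) i, ?_, ?_⟩
      · rw [Fin.lt_def]
        have hq' : (q : ℕ) = M * (gridi q).val + (gride q).val := (Nat.div_add_mod q.val M).symm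
        have hgj : (gride q).val = j.val := congrArg Fin.val hj
        have hij' : i.val < (gride q).val := by rw [hgj]; exact hij
        show M * (gridi q).val + i.val < q.val
        rw [hq']
        exact Nat.add_lt_add_left hij' _
      · simp only [hU, gridi_gpos, gride_gpos, hF, Option.elim_none]
  · rw [key v, key w]
    have h1 := hc fun t => (toA (v t)).choose
    have h2 := hc fun t => (toA (w t)).choose
    rw [hE] at h1 h2
    exact h1.trans h2.symm

end GRProof2

namespace GRProof3
open Sum List GRProof GRProof2

instance finiteOption (A : Type) [Finite A] : Finite (Option A) :=
  Finite.of_equiv (A ⊕ PUnit) (Equiv.optionEquivSumPUnit.{0,0} A).symm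

def squash {A : Type} {M : ℕ} : Option A ⊕ Fin M → A ⊕ Fin (M + 1) :=
  Sum.elim (fun o => o.elim (Sum.inr 0) Sum.inl) (fun t => Sum.inr t.succ)

def desome {A : Type} {l' : ℕ} (a : A) : Option A ⊕ Fin l' → A ⊕ Fin l' :=
  Sum.elim (fun o => Sum.inl (o.getD a)) Sum.inr

def toSigma {A : Type} {l : ℕ} : A ⊕ Fin (l + 1) → Option A ⊕ Fin l :=
  Sum.elim (fun a => Sum.inl (some a)) (fun j => Fin.cases (Sum.inl none) Sum.inr j)

theorem squash_toSigma {A : Type} {l : ℕ} (x : A ⊕ Fin (l + 1)) : squash (toSigma x) = x := by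
  rcases x with a | j
  · rfl
  · rcases Fin.eq_zero_or_eq_succ j with rfl | ⟨j', rfl⟩
    · rfl
    · simp [toSigma, squash]

theorem desome_map {A : Type} {l' : ℕ} (a : A) (x : A ⊕ Fin l') :
    desome a (Sum.map some id x) = x := by rcases x with b | i <;> rfl

theorem squash_eq_inr_succ {A : Type} {M : ℕ} {x : Option A ⊕ Fin M} {t : Fin M}
    (h : squash x = Sum.inr t.succ) : x = Sum.inr t := by
  rcases x with (_ | b) | s
  · exact absurd (Sum.inr.inj h).symm (Fin.succ_ne_zero t)
  · simp [squash] at h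
  · rw [show s = t from Fin.succ_inj.mp (Sum.inr.inj h)]

theorem toSigma_eq_inr {A : Type} {l : ℕ} {x : A ⊕ Fin (l + 1)} {i : Fin l}
    (h : toSigma x = Sum.inr i) : x = Sum.inr i.succ := by
  have := congrArg squash h
  rw [squash_toSigma] at this
  rw [this]; rfl

theorem isPW_sigma {A : Type} {M l : ℕ} {v : Fin (M + 1) → A ⊕ Fin (l + 1)}
    (hv : IsParamWord v) (h0 : v 0 = Sum.inr 0) :
    IsParamWord (fun t => toSigma (v t.succ)) := by
  constructor
  · intro i
    obtain ⟨p, hp⟩ := hv.1 i.succ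
    have hp0 : p ≠ 0 := by
      rintro rfl; rw [h0] at hp; exact Fin.succ_ne_zero i (Sum.inr.inj hp).symm
    obtain ⟨q, rfl⟩ := Fin.eq_succ_of_ne_zero hp0
    refine ⟨q, ?_⟩
    show toSigma (v q.succ) = Sum.inr i
    rw [hp]; simp [toSigma]
  · intro i j hij t ht
    have hvt : v t.succ = Sum.inr j.succ := toSigma_eq_inr ht
    obtain ⟨p, hplt, hp⟩ := hv.2 i.succ j.succ (Fin.succ_lt_succ_iff.mpr hij) t.succ hvt
    have hp0 : p ≠ 0 := by
      rintro rfl; rw [h0] at hp; exact Fin.succ_ne_zero i (Sum.inr.inj hp).symm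
    obtain ⟨s, rfl⟩ := Fin.eq_succ_of_ne_zero hp0
    refine ⟨s, Fin.succ_lt_succ_iff.mp hplt, ?_⟩
    show toSigma (v s.succ) = Sum.inr i
    rw [hp]; simp [toSigma]

theorem lx (l : ℕ) (ih : GRStmt l) :
    ∀ (A : Type) [Finite A] (M : ℕ) (κ : Type) [Finite κ] [Nonempty κ],
    ∃ n : ℕ, ∀ χ : (Fin n → A ⊕ Fin (l + 1)) → κ,
      ∃ U : Fin n → A ⊕ Fin M, IsParamWord U ∧
        ∃ f : List A → κ, ∀ v : Fin M → A ⊕ Fin (l + 1), IsParamWord v →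
          χ (compWord U v) = f (prefixA v) := by
  classical
  intro A instA M
  induction M with
  | zero =>
    intro κ _ _
    refine ⟨0, fun χ => ⟨Fin.elim0, isPW_elim0, fun _ => Classical.arbitrary κ, fun v hv => ?_⟩⟩
    obtain ⟨p, _⟩ := hv.1 0
    exact p.elim0
  | succ M ihM =>
    intro κ instκ instκne
    obtain ⟨R, hR⟩ := ihM (A → κ)
    obtain ⟨n₂, hn₂⟩ := ih (Option A) R κ
    refine ⟨n₂ + 1, fun χ => ?_⟩
    set glue : (Fin n₂ → Option A ⊕ Fin l) → (Fin (n₂ + 1) → A ⊕ Fin (l + 1)) := fun ρ =>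
      Fin.cons (Sum.inr 0) (fun q => squash (ρ q)) with hglue
    obtain ⟨C₁, hC₁pw, hC₁⟩ := hn₂ (fun ρ => χ (glue ρ))
    set Ξ : (Fin R → A ⊕ Fin (l + 1)) → (A → κ) := fun ρ a =>
      χ (Fin.cons (Sum.inl a) (fun q => desome a (compWord C₁ (Sum.map some id ∘ ρ) q))) with hΞ
    obtain ⟨C₂, hC₂pw, g, hg⟩ := hR Ξ
    set C : Fin n₂ → Option A ⊕ Fin M := compWord C₁ (Sum.map some id ∘ C₂) with hCdef
    have hCpw : IsParamWord C := isPW_comp hC₁pw (isPW_map some hC₂pw)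
    set U : Fin (n₂ + 1) → A ⊕ Fin (M + 1) :=
      Fin.cons (Sum.inr 0) (fun q => squash (C q)) with hUdef
    have hU0 : U 0 = Sum.inr 0 := by rw [hUdef]; exact Fin.cons_zero _ _
    have hUs : ∀ q, U q.succ = squash (C q) := by
      intro q; rw [hUdef]; exact Fin.cons_succ _ _ q
    have hUpw : IsParamWord U := by
      constructor
      · intro i
        rcases Fin.eq_zero_or_eq_succ i with rfl | ⟨t, rfl⟩
        · exact ⟨0, hU0⟩
        · obtain ⟨q, hq⟩ := hCpw.1 t
          exact ⟨q.succ, by rw [hUs, hq]; rfl⟩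
      · intro i j hij q hq
        rcases Fin.eq_zero_or_eq_succ q with rfl | ⟨q', rfl⟩
        · rw [hU0] at hq
          rw [← Sum.inr.inj hq] at hij
          exact absurd hij (Fin.not_lt_zero i)
        · rw [hUs] at hq
          rcases Fin.eq_zero_or_eq_succ j with rfl | ⟨j', rfl⟩
          · exact absurd hij (Fin.not_lt_zero i)
          · have hCq : C q' = Sum.inr j' := squash_eq_inr_succ hq
            rcases Fin.eq_zero_or_eq_succ i with rfl | ⟨i', rfl⟩
            · exact ⟨0, Fin.succ_pos q', hU0⟩
            · obtain ⟨p, hplt, hp⟩ := hCpw.2 i' j' (Fin.succ_lt_succ_iff.mp hij) q' hCq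
              exact ⟨p.succ, Fin.succ_lt_succ_iff.mpr hplt, by rw [hUs, hp]; rfl⟩
    set c₀ : κ := if h : ∃ ρ : Fin R → Option A ⊕ Fin l, IsParamWord ρ then
        χ (glue (compWord C₁ h.choose)) else Classical.arbitrary κ with hc₀
    refine ⟨U, hUpw, fun L => match L with | [] => c₀ | a :: L' => g L' a, fun v hv => ?_⟩
    cases hv0 : v 0 with
    | inr j =>
      have hj0 : j = 0 := by
        by_contra hj
        obtain ⟨p, hplt, _⟩ := hv.2 0 j (Fin.pos_of_ne_zero hj) 0 hv0
        exact absurd hplt (Fin.not_lt_zero p)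
      subst hj0
      have hσpw : IsParamWord (fun t => toSigma (v t.succ)) := isPW_sigma hv hv0
      have key0 : compWord U v =
          glue (compWord C₁ (compWord (Sum.map some id ∘ C₂) (fun t => toSigma (v t.succ)))) := by
        rw [← comp_assoc, ← hCdef]
        funext q
        rcases Fin.eq_zero_or_eq_succ q with rfl | ⟨q', rfl⟩
        · show Sum.elim Sum.inl v (U 0) = _
          rw [hU0, hglue]
          simp [compWord, hv0]
        · show Sum.elim Sum.inl v (U q'.succ) = _
          rw [hUs, hglue]
          simp only [Fin.cons_succ, compWord]
          rcases hc : C q' with ob | t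
          · rcases ob with _ | b
            · simp [squash, hv0]
            · simp [squash]
          · simp only [Sum.elim_inr, squash_toSigma]
            show Sum.elim Sum.inl v (Sum.inr t.succ) = v t.succ
            rfl
      have hρpw : IsParamWord (compWord (Sum.map some id ∘ C₂) (fun t => toSigma (v t.succ))) :=
        isPW_comp (isPW_map some hC₂pw) hσpw
      have hex : ∃ ρ : Fin R → Option A ⊕ Fin l, IsParamWord ρ := ⟨_, hρpw⟩
      rw [key0, prefixA_of_inr hv0]
      show χ (glue _) = c₀
      rw [hc₀, dif_pos hex]
      exact hC₁ _ hex.choose hρpw hex.choose_spec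
    | inl a =>
      have hτpw : IsParamWord (fun t => v t.succ) := isPW_tail hv hv0
      have key : compWord U v = Fin.cons (Sum.inl a)
          (fun q => desome a (compWord C₁ (Sum.map some id ∘ (compWord C₂ (fun t => v t.succ))) q)) := by
        funext q
        rcases Fin.eq_zero_or_eq_succ q with rfl | ⟨q', rfl⟩
        · show Sum.elim Sum.inl v (U 0) = _
          rw [hU0]
          simp [compWord, hv0]
        · show Sum.elim Sum.inl v (U q'.succ) = _
          rw [hUs]
          simp only [Fin.cons_succ, compWord]
          rcases hc1 : C₁ q' with ob | r
          · have hc : C q' = Sum.inl ob := by rw [hCdef]; simp [compWord, hc1]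
            rw [hc]
            rcases ob with _ | b
            · simp [squash, desome, hv0]
            · simp [squash, desome]
          · have hc : C q' = Sum.map some id (C₂ r) := by rw [hCdef]; simp [compWord, hc1]
            rw [hc]
            simp only [Sum.elim_inr]
            rcases hc2 : C₂ r with b | t
            · simp [squash, desome, compWord, hc2]
            · simp only [Sum.map_inr, id, squash, Sum.elim_inr]
              show v t.succ = desome a (Sum.map some id (Sum.elim Sum.inl (fun t => v t.succ) (C₂ r)))
              rw [hc2]
              simp [desome_map]
      rw [key, prefixA_of_inl hv0]
      show Ξ (compWord C₂ (fun t => v t.succ)) a = _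
      rw [hg _ hτpw]
  done

end GRProof3

namespace GRProof4
open Sum List GRProof GRProof2 GRProof3

theorem stair (A : Type) [Finite A] (l : ℕ) :
    ∀ (s : ℕ) (κ : Type) [Finite κ] [Nonempty κ],
    ∃ M : ℕ, ∀ f : List A → κ, ∃ (w : Fin M → A ⊕ Fin s) (c : Fin s → κ),
      IsParamWord w ∧ ∀ v : Fin s → A ⊕ Fin (l + 1), IsParamWord v →
        ∀ t : Fin s, v t = Sum.inr 0 → (∀ t', t' < t → (v t').isLeft = true) →
          f (prefixA (compWord w v)) = c t := by
  intro s
  induction s with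
  | zero =>
    intro κ _ _
    exact ⟨0, fun f => ⟨Fin.elim0, Fin.elim0, isPW_elim0, fun v hv t => t.elim0⟩⟩
  | succ s ihs =>
    intro κ instκ instκn
    obtain ⟨L, hL⟩ := line_fin A (Fin s → κ)
    obtain ⟨M, hM⟩ := ihs ((Fin L → A) → κ)
    refine ⟨L + M, fun f => ?_⟩
    obtain ⟨w, c', hwpw, hw⟩ := hM (fun Lst z => f (List.ofFn z ++ Lst))
    obtain ⟨F, ⟨i₀, hi₀⟩, cE, hcE⟩ := hL (fun z t => c' t z)
    set block : Fin L → A ⊕ Fin (s + 1) := fun q => (F q).elim (Sum.inr 0) Sum.inl with hblock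
    set w' : Fin (L + M) → A ⊕ Fin (s + 1) :=
      Fin.append block (fun q => Sum.map id Fin.succ (w q)) with hw'def
    have hw'left : ∀ q : Fin L, w' (Fin.castAdd M q) = block q := by
      intro q; rw [hw'def]; exact Fin.append_left _ _ q
    have hw'right : ∀ q : Fin M, w' (Fin.natAdd L q) = Sum.map id Fin.succ (w q) := by
      intro q; rw [hw'def]; exact Fin.append_right _ _ q
    have hsplit : ∀ q : Fin (L + M),
        (∃ q1 : Fin L, q = Fin.castAdd M q1) ∨ (∃ q2 : Fin M, q = Fin.natAdd L q2) := by
      intro q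
      by_cases h : q.val < L
      · exact Or.inl ⟨⟨q.val, h⟩, Fin.ext rfl⟩
      · refine Or.inr ⟨⟨q.val - L, by have := q.2; omega⟩, Fin.ext ?_⟩
        show q.val = L + (q.val - L)
        omega
    have hw'pw : IsParamWord w' := by
      constructor
      · intro i
        rcases Fin.eq_zero_or_eq_succ i with rfl | ⟨t, rfl⟩
        · exact ⟨Fin.castAdd M i₀, by rw [hw'left]; simp [hblock, hi₀]⟩
        · obtain ⟨q, hq⟩ := hwpw.1 t
          exact ⟨Fin.natAdd L q, by rw [hw'right, hq]; rfl⟩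
      · intro i j hij q hq
        rcases hsplit q with ⟨q1, rfl⟩ | ⟨q2, rfl⟩
        · rw [hw'left] at hq
          have hj : j = 0 := by
            rcases hF : F q1 with _ | b
            · rw [hblock] at hq; simp only [hF, Option.elim_none] at hq
              exact (Sum.inr.inj hq).symm
            · rw [hblock] at hq; simp only [hF, Option.elim_some] at hq
              exact (Sum.inl_ne_inr hq).elim
          rw [hj] at hij
          exact absurd hij (Fin.not_lt_zero i)
        · rw [hw'right] at hq
          rcases hwq : w q2 with b | j'
          · rw [hwq] at hq; simp at hq
          · rw [hwq] at hq
            have hj : j = j'.succ := (Sum.inr.inj hq).symm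
            subst hj
            rcases Fin.eq_zero_or_eq_succ i with rfl | ⟨i', rfl⟩
            · refine ⟨Fin.castAdd M i₀, ?_, by rw [hw'left]; simp [hblock, hi₀]⟩
              rw [Fin.lt_def]
              show (i₀ : ℕ) < L + (q2 : ℕ)
              have := i₀.2; omega
            · obtain ⟨p, hplt, hp⟩ := hwpw.2 i' j' (Fin.succ_lt_succ_iff.mp hij) q2 hwq
              refine ⟨Fin.natAdd L p, ?_, by rw [hw'right, hp]; rfl⟩
              rw [Fin.lt_def]
              show L + (p : ℕ) < L + (q2 : ℕ)
              exact Nat.add_lt_add_left hplt L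
    refine ⟨w', Fin.cons (f (prefixA (fun q : Fin L => (F q).elim (Sum.inr 0) Sum.inl : Fin L → A ⊕ Fin (l+1)))) cE,
      hw'pw, ?_⟩
    intro v hv t hvt hprev
    have hcomp : compWord w' v = Fin.append (fun q => Sum.elim Sum.inl v (block q))
        (fun q => Sum.elim Sum.inl v (Sum.map id Fin.succ (w q))) := by
      funext q
      rcases hsplit q with ⟨q1, rfl⟩ | ⟨q2, rfl⟩
      · rw [show compWord w' v (Fin.castAdd M q1) = Sum.elim Sum.inl v (w' (Fin.castAdd M q1))
          from rfl, hw'left, Fin.append_left]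
      · rw [show compWord w' v (Fin.natAdd L q2) = Sum.elim Sum.inl v (w' (Fin.natAdd L q2))
          from rfl, hw'right, Fin.append_right]
    rcases Fin.eq_zero_or_eq_succ t with rfl | ⟨t₀, rfl⟩
    · -- first variable of v is at position 0
      have hbv : (fun q : Fin L => Sum.elim Sum.inl v (block q)) =
          fun q : Fin L => (F q).elim (Sum.inr 0) Sum.inl := by
        funext q
        rcases hF : F q with _ | b
        · rw [hblock]; simp only [hF, Option.elim_none, Sum.elim_inr]; exact hvt
        · rw [hblock]; simp [hF]
      rw [hcomp, prefixA, List.ofFn_fin_append, hbv]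
      rw [preList_append_stop]
      · rw [Fin.cons_zero]
        rfl
      · refine ⟨Sum.inr 0, ?_, rfl⟩
        rw [List.mem_ofFn]
        exact ⟨i₀, by simp [hi₀]⟩
    · -- first variable at a later position
      have h0 := hprev 0 (Fin.succ_pos t₀)
      obtain ⟨a, hv0⟩ := Sum.isLeft_iff.mp h0
      have hvtpw : IsParamWord (fun t => v t.succ) := isPW_tail hv hv0
      have hbv : (fun q : Fin L => Sum.elim Sum.inl v (block q)) =
          fun q : Fin L => Sum.inl ((F q).getD a) := by
        funext q
        rcases hF : F q with _ | b
        · rw [hblock]; simp only [hF, Option.elim_none, Sum.elim_inr, Option.getD_none]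
          exact hv0
        · rw [hblock]; simp [hF]
      have htail : (fun q => Sum.elim Sum.inl v (Sum.map id Fin.succ (w q))) =
          compWord w (fun t => v t.succ) := by
        funext q
        rcases hwq : w q with b | tt <;> simp [compWord, hwq]
      rw [hcomp, prefixA, List.ofFn_fin_append, hbv, htail]
      have : List.ofFn (fun q : Fin L => Sum.inl ((F q).getD a) : Fin L → A ⊕ Fin (l+1)) =
          (List.ofFn (fun q : Fin L => (F q).getD a)).map Sum.inl := by
        rw [List.map_ofFn]; rfl
      rw [this, preList_inl_append]
      have hstep := congrFun (hw (fun t => v t.succ) hvtpw t₀ hvt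
        (fun t' ht' => hprev t'.succ (Fin.succ_lt_succ_iff.mpr ht'))) (fun q => (F q).getD a)
      rw [show (preList (List.ofFn (compWord w fun t => v t.succ))) =
        prefixA (compWord w fun t => v t.succ) from rfl, hstep]
      have := congrFun (hcE a) t₀
      rw [Fin.cons_succ]
      exact this

end GRProof4

set_option maxRecDepth 40000
namespace GRProof5
open Sum List GRProof GRProof2 GRProof3 GRProof4

theorem first_var {A : Type} {M l : ℕ} {v : Fin M → A ⊕ Fin (l + 1)} (hv : IsParamWord v) :
    ∃ p : Fin M, v p = Sum.inr 0 ∧ (∀ t, t < p → (v t).isLeft = true) ∧ (p : ℕ) + (l + 1) ≤ M := by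
  classical
  have hex : ∃ t, (v t).isRight = true := by
    obtain ⟨p, hp⟩ := hv.1 0
    exact ⟨p, by rw [hp]; rfl⟩
  set P := Finset.univ.filter (fun t => (v t).isRight = true) with hP
  have hPne : P.Nonempty := ⟨hex.choose, by simp [hP, hex.choose_spec]⟩
  set p := P.min' hPne with hpdef
  have hmem : (v p).isRight = true :=
    (Finset.mem_filter.mp (P.min'_mem hPne)).2
  have hleft : ∀ t, t < p → (v t).isLeft = true := by
    intro t ht
    rcases h : v t with a | j
    · rfl
    · exfalso
      have htP : t ∈ P := by simp [hP, h]
      exact absurd (P.min'_le t htP) (not_le.mpr ht)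
  have hp0 : v p = Sum.inr 0 := by
    rcases h : v p with a | j
    · rw [h] at hmem; simp at hmem
    · have hj : j = 0 := by
        refine first_var_zero hv h ?_
        intro q hq hq0
        have := hleft q hq
        rw [hq0] at this
        simp at this
      rw [hj]
  have hψ : ∀ i : Fin (l + 1), ∃ t : Fin M, v t = Sum.inr i ∧ p ≤ t := by
    intro i
    obtain ⟨t, ht⟩ := hv.1 i
    refine ⟨t, ht, ?_⟩
    by_contra h
    have := hleft t (not_le.mp h)
    rw [ht] at this
    simp at this
  choose ψ hψ1 hψ2 using hψ
  have hinj : Function.Injective ψ := by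
    intro i j heq
    have h1 := hψ1 i
    rw [heq, hψ1 j] at h1
    exact (Sum.inr.inj h1).symm
  have hcard : (l + 1) + (p : ℕ) ≤ M := by
    have h1 : (Finset.univ.image (fun i : Fin (l + 1) => (ψ i : ℕ))).card = l + 1 := by
      rw [Finset.card_image_of_injective _ (fun a b hab => hinj (Fin.val_injective hab))]
      simp
    have h2 : (Finset.univ.image fun i : Fin (l + 1) => (ψ i : ℕ)) ⊆ Finset.Ico (p : ℕ) M := by
      intro x hx
      simp only [Finset.mem_image, Finset.mem_univ, true_and] at hx
      obtain ⟨i, rfl⟩ := hx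
      rw [Finset.mem_Ico]
      exact ⟨hψ2 i, (ψ i).2⟩
    have h3 := Finset.card_le_card h2
    rw [h1, Nat.card_Ico] at h3
    omega
  exact ⟨p, hp0, hleft, by omega⟩

theorem gr_step (l : ℕ) (ih : GRStmt l) : GRStmt (l + 1) := by
  classical
  have hlx := lx l ih
  intro A instA M κ instκ instκn
  by_cases hA : Nonempty A
  swap
  · obtain ⟨n, hn⟩ := hlx A M κ
    refine ⟨n, fun χ => ?_⟩
    obtain ⟨U, hU, f, hf⟩ := hn χ
    refine ⟨U, hU, fun v w hv hw => ?_⟩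
    rw [hf v hv, hf w hw, prefixA_of_empty hA, prefixA_of_empty hA]
  obtain ⟨a₀⟩ := hA
  by_cases hex : ∃ v : Fin M → A ⊕ Fin (l + 1), IsParamWord v
  swap
  · exact ⟨M, fun χ => ⟨Sum.inr, isPW_id, fun v w hv hw => absurd ⟨v, hv⟩ hex⟩⟩
  letI : Fintype κ := Fintype.ofFinite κ
  obtain ⟨v₀, hv₀⟩ := hex
  obtain ⟨p₀, _, _, hbound₀⟩ := first_var hv₀
  obtain ⟨mb, hmb⟩ : ∃ mb, mb = M - l := ⟨_, rfl⟩
  obtain ⟨K, hK⟩ : ∃ K, K = Fintype.card κ := ⟨_, rfl⟩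
  obtain ⟨s', hs'⟩ : ∃ x, x = K * (mb - 1) + 1 := ⟨_, rfl⟩
  obtain ⟨s, hs⟩ : ∃ x, x = s' + (l + 1) := ⟨_, rfl⟩
  have hs's : s' ≤ s := by omega
  have hmbM : mb ≤ M := by omega
  have hmb1 : 1 ≤ mb := by omega
  obtain ⟨Mst, hst⟩ := stair A l s κ
  obtain ⟨N, hN⟩ := hlx A Mst κ
  refine ⟨N, fun χ => ?_⟩
  obtain ⟨U, hUpw, f, hf⟩ := hN χ
  obtain ⟨w, c, hwpw, hw⟩ := hst f
  have hcard : Fintype.card κ * (mb - 1) < Fintype.card (Fin s') := by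
    rw [Fintype.card_fin, hs', ← hK]; omega
  obtain ⟨cstar, hcstar⟩ := Fintype.exists_lt_card_fiber_of_mul_lt_card
      (fun t : Fin s' => c (Fin.castLE hs's t)) hcard
  obtain ⟨T, hTsub, hTcard⟩ := Finset.exists_subset_card_eq
      (s := Finset.filter (fun x : Fin s' => c (Fin.castLE hs's x) = cstar) Finset.univ) (n := mb) (by omega)
  set g : Fin mb ↪o Fin s' := T.orderEmbOfFin hTcard with hgdef
  have hgfib : ∀ j : Fin mb, c (Fin.castLE hs's (g j)) = cstar := by
    intro j
    have hjT : g j ∈ T := T.orderEmbOfFin_mem hTcard j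
    have := hTsub hjT
    simp only [Finset.mem_filter, Finset.mem_univ, true_and] at this
    exact this
  have hb1 : ∀ r : Fin M, ¬ ((r : ℕ) < mb) → s' + 1 + ((r : ℕ) - mb) < s := by
    intro r h; have := r.2; omega
  have hb2 : ∀ t : Fin s, s' + 1 ≤ (t : ℕ) → mb + ((t : ℕ) - (s' + 1)) < M := by
    intro t h; have := t.2; omega
  set posOf : Fin M → Fin s := fun r =>
    if h : (r : ℕ) < mb then Fin.castLE hs's (g ⟨r, h⟩)
    else ⟨s' + 1 + ((r : ℕ) - mb), hb1 r h⟩ with hposOf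
  have hpos_lt : ∀ (r : Fin M) (h : (r : ℕ) < mb), posOf r = Fin.castLE hs's (g ⟨r, h⟩) := by
    intro r h
    exact dif_pos h
  have hpos_ge : ∀ (r : Fin M) (h : ¬ ((r : ℕ) < mb)),
      posOf r = ⟨s' + 1 + ((r : ℕ) - mb), hb1 r h⟩ := by
    intro r h
    exact dif_neg h
  have hposlt : ∀ r r' : Fin M, r < r' → posOf r < posOf r' := by
    intro r r' hlt
    have hlt' : (r : ℕ) < (r' : ℕ) := hlt
    by_cases h1 : (r : ℕ) < mb <;> by_cases h2 : (r' : ℕ) < mb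
    · rw [hpos_lt r h1, hpos_lt r' h2]
      have hgg : g ⟨r, h1⟩ < g ⟨r', h2⟩ :=
        g.strictMono (show (⟨r, h1⟩ : Fin mb) < ⟨r', h2⟩ from hlt')
      exact hgg
    · rw [hpos_lt r h1, hpos_ge r' h2]
      have := (g ⟨r, h1⟩).2
      show ((g ⟨r, h1⟩ : Fin s') : ℕ) < s' + 1 + ((r' : ℕ) - mb)
      omega
    · omega
    · rw [hpos_ge r h1, hpos_ge r' h2]
      show s' + 1 + ((r : ℕ) - mb) < s' + 1 + ((r' : ℕ) - mb)
      omega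
  have hposmono : ∀ x y : Fin M, x ≤ y → posOf x ≤ posOf y := by
    intro x y hxy
    rcases eq_or_lt_of_le hxy with h | h
    · exact le_of_eq (congrArg posOf h)
    · exact le_of_lt (hposlt _ _ h)
  have hposinj : Function.Injective posOf := by
    intro x y hxy
    rcases lt_trichotomy x y with h | h | h
    · exact absurd hxy (ne_of_lt (hposlt _ _ h))
    · exact h
    · exact absurd hxy.symm (ne_of_lt (hposlt _ _ h))
  set sel : Fin s → A ⊕ Fin M := fun t =>
    if h : ∃ j : Fin mb, posOf (Fin.castLE hmbM j) = t then
      Sum.inr (Fin.castLE hmbM h.choose)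
    else if h2 : s' + 1 ≤ (t : ℕ) then
      Sum.inr ⟨mb + ((t : ℕ) - (s' + 1)), hb2 t h2⟩
    else Sum.inl a₀ with hsel
  have hsel1 : ∀ (t : Fin s) (h : ∃ j : Fin mb, posOf (Fin.castLE hmbM j) = t),
      sel t = Sum.inr (Fin.castLE hmbM h.choose) := by
    intro t h
    exact dif_pos h
  have hsel2 : ∀ (t : Fin s) (h1 : ¬ ∃ j : Fin mb, posOf (Fin.castLE hmbM j) = t)
      (h2 : s' + 1 ≤ (t : ℕ)),
      sel t = Sum.inr ⟨mb + ((t : ℕ) - (s' + 1)), hb2 t h2⟩ := by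
    intro t h1 h2
    exact (dif_neg h1).trans (dif_pos h2)
  have hsel3 : ∀ (t : Fin s) (h1 : ¬ ∃ j : Fin mb, posOf (Fin.castLE hmbM j) = t)
      (h2 : ¬ (s' + 1 ≤ (t : ℕ))), sel t = Sum.inl a₀ := by
    intro t h1 h2
    exact (dif_neg h1).trans (dif_neg h2)
  have hsel_pos : ∀ r : Fin M, sel (posOf r) = Sum.inr r := by
    intro r
    by_cases hr : (r : ℕ) < mb
    · have hcond : ∃ j : Fin mb, posOf (Fin.castLE hmbM j) = posOf r :=
        ⟨⟨r, hr⟩, congrArg posOf (Fin.ext rfl)⟩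
      rw [hsel1 _ hcond, hposinj hcond.choose_spec]
    · have hval : (posOf r : ℕ) = s' + 1 + ((r : ℕ) - mb) := by
        rw [hpos_ge r hr]
      have hcond : ¬ ∃ j : Fin mb, posOf (Fin.castLE hmbM j) = posOf r := by
        rintro ⟨j, hj⟩
        have hj' : ((Fin.castLE hmbM j : Fin M) : ℕ) < mb := j.2
        have hvj : (posOf (Fin.castLE hmbM j) : ℕ) < s' := by
          rw [hpos_lt _ hj']
          exact (g ⟨_, hj'⟩).2
        rw [hj, hval] at hvj
        omega
      rw [hsel2 _ hcond (by rw [hval]; omega)]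
      congr 1
      apply Fin.ext
      show mb + ((posOf r : ℕ) - (s' + 1)) = (r : ℕ)
      rw [hval]
      omega
  have hsel_inv : ∀ (t : Fin s) (r : Fin M), sel t = Sum.inr r → t = posOf r := by
    intro t r h
    by_cases h1 : ∃ j : Fin mb, posOf (Fin.castLE hmbM j) = t
    · rw [hsel1 t h1] at h
      have hr : Fin.castLE hmbM h1.choose = r := Sum.inr.inj h
      rw [← hr]
      exact h1.choose_spec.symm
    · by_cases h2 : s' + 1 ≤ (t : ℕ)
      · rw [hsel2 t h1 h2] at h
        have hr := Sum.inr.inj h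
        have hrval : (r : ℕ) = mb + ((t : ℕ) - (s' + 1)) := by rw [← hr]
        have hrge : ¬ (r : ℕ) < mb := by omega
        rw [hpos_ge r hrge]
        apply Fin.ext
        show (t : ℕ) = s' + 1 + ((r : ℕ) - mb)
        omega
      · rw [hsel3 t h1 h2] at h
        exact (Sum.inl_ne_inr h).elim
  have hselpw : IsParamWord sel := by
    constructor
    · exact fun r => ⟨posOf r, hsel_pos r⟩
    · intro i j hij q hq
      rw [hsel_inv q j hq]
      exact ⟨posOf i, hposlt i j hij, hsel_pos i⟩
  have main : ∀ v : Fin M → A ⊕ Fin (l + 1), IsParamWord v →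
      χ (compWord (compWord U (compWord w sel)) v) = cstar := by
    intro v hv
    obtain ⟨p, hp0, hleft, hbound⟩ := first_var hv
    have hplt : (p : ℕ) < mb := by omega
    have hupw : IsParamWord (compWord sel v) := isPW_comp hselpw hv
    have hut : compWord sel v (posOf p) = Sum.inr 0 := by
      show Sum.elim Sum.inl v (sel (posOf p)) = Sum.inr 0
      rw [hsel_pos p]
      exact hp0
    have huleft : ∀ t', t' < posOf p → ((compWord sel v) t').isLeft = true := by
      intro t' ht'
      show (Sum.elim Sum.inl v (sel t')).isLeft = true
      rcases hst' : sel t' with a | r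
      · rfl
      · have ht'eq := hsel_inv t' r hst'
        rw [ht'eq] at ht'
        have hrp : r < p := by
          by_contra hge
          exact absurd ht' (not_lt.mpr (hposmono p r (not_lt.mp hge)))
        have := hleft r hrp
        simpa using this
    have h1 : compWord (compWord U (compWord w sel)) v = compWord U (compWord w (compWord sel v)) := by
      rw [comp_assoc, comp_assoc]
    rw [h1, hf _ (isPW_comp hwpw hupw), hw _ hupw (posOf p) hut huleft]
    have : posOf p = Fin.castLE hs's (g ⟨p, hplt⟩) := hpos_lt p hplt
    rw [this]
    exact hgfib ⟨p, hplt⟩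
  exact ⟨compWord U (compWord w sel), isPW_comp hUpw (isPW_comp hwpw hselpw),
    fun v v2 hv hv2 => (main v hv).trans (main v2 hv2).symm⟩

theorem grall : ∀ l, GRStmt l := by
  intro l
  induction l with
  | zero => exact gr_zero
  | succ l ih => exact gr_step l ih

end GRProof5

theorem grahamRothschild' (A : Type) [Finite A] (m l k : ℕ)
    (hm : 1 ≤ m) (hl : 1 ≤ l) (hk : 2 ≤ k) :
    ∃ n : ℕ, 1 ≤ n ∧ ∀ χ : (Fin n → A ⊕ Fin l) → Fin k,
      ∃ u : Fin n → A ⊕ Fin m, IsParamWord u ∧ ∃ j : Fin k,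
        ∀ v : Fin m → A ⊕ Fin l, IsParamWord v → χ (compWord u v) = j := by
  classical
  haveI : Nonempty (Fin k) := ⟨⟨0, by omega⟩⟩
  obtain ⟨n, hn⟩ := GRProof5.grall l A m (Fin k)
  refine ⟨n, ?_, fun χ => ?_⟩
  · obtain ⟨U, hU, _⟩ := hn (fun _ => ⟨0, by omega⟩)
    obtain ⟨p, _⟩ := hU.1 ⟨0, hm⟩
    exact lt_of_le_of_lt (Nat.zero_le p.val) p.2
  · obtain ⟨U, hU, hmono⟩ := hn χ
    by_cases hex : ∃ v : Fin m → A ⊕ Fin l, IsParamWord v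
    · exact ⟨U, hU, χ (compWord U hex.choose),
        fun v hv => hmono v hex.choose hv hex.choose_spec⟩
    · exact ⟨U, hU, ⟨0, by omega⟩, fun v hv => absurd ⟨v, hv⟩ hex⟩


/-- The Graham–Rothschild theorem: for a finite alphabet `A`, `m, ℓ ≥ 1` and `k ≥ 2` there is a
positive integer `n` such that for every `k`-coloring of the `ℓ`-parameter words of length `n`
over `A` there are an `m`-parameter word `u` of length `n` and a color `j` such that
`u · v` has color `j` for every `ℓ`-parameter word `v` of length `m`. -/
theorem grahamRothschild (A : Type) [Finite A] (m l k : ℕ)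
    (hm : 1 ≤ m) (hl : 1 ≤ l) (hk : 2 ≤ k) :
    ∃ n : ℕ, 1 ≤ n ∧ ∀ χ : (Fin n → A ⊕ Fin l) → Fin k,
      ∃ u : Fin n → A ⊕ Fin m, IsParamWord u ∧ ∃ j : Fin k,
        ∀ v : Fin m → A ⊕ Fin l, IsParamWord v → χ (compWord u v) = j := by
  exact grahamRothschild' A m l k hm hl hk
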